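/- arXiv:0804.3717 — 4 statements merged into one kernel-verified Lean document; each statement's English description precedes it below -/
import Mathlib

section
/- Let θ'(ξ) = γ(1/(ξ+iξ_c) + 1/(ξ−iξ_c)) and f(ξ) = iξ_c/(ξ+iξ_c). Then for every m ≥ 1, θ'(ξ)·Re(f(ξ)^m) = −(γ/ξ_c) Σ_{j=0}^{m−1} σ_j 2^{−j} Im(f(ξ)^{m+1−j}), where σ_0 = −1 and σ_j = 1 for j ≥ 1. -/
open Complex

/-- Key real induction: if `a = a² + b²` and `A, B` are the real/imaginary parts of
powers of `a + b i`, then the weighted sum of `B`'s equals `-2 b A m`. -/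
lemma sum_key_aux (a b : ℝ) (h : a = a ^ 2 + b ^ 2) (A B : ℕ → ℝ)
    (hA0 : A 0 = 1) (hB0 : B 0 = 0)
    (hA : ∀ k, A (k + 1) = a * A k - b * B k)
    (hB : ∀ k, B (k + 1) = a * B k + b * A k) :
    ∀ m, 1 ≤ m →
      ∑ j ∈ Finset.range m, (if j = 0 then (-1 : ℝ) else 1) * (1 / 2) ^ j * B (m + 1 - j)
        = -2 * b * A m := by
  intro m hm
  induction m, hm using Nat.le_induction with
  | base =>
      have h2 : B 2 = 2 * a * b := by
        rw [show (2 : ℕ) = 1 + 1 from rfl, hB, hB, hA, hA0, hB0]; ring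
      have h1 : A 1 = a := by rw [show (1 : ℕ) = 0 + 1 from rfl, hA, hA0, hB0]; ring
      rw [Finset.sum_range_one]
      norm_num [h2, h1]
      ring
  | succ m hm IH =>
      rw [Finset.sum_range_succ']
      have hterm : ∀ i ∈ Finset.range m,
          (if i + 1 = 0 then (-1 : ℝ) else 1) * (1 / 2) ^ (i + 1) * B (m + 1 + 1 - (i + 1))
            = (1 / 2) * ((1 / 2) ^ i * B (m + 1 - i)) := by
        intro i _
        rw [if_neg (Nat.succ_ne_zero i), Nat.succ_sub_succ]
        ring
      rw [Finset.sum_congr rfl hterm, ← Finset.mul_sum]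
      have hd : ∑ i ∈ Finset.range m, ((1 / 2 : ℝ)) ^ i * B (m + 1 - i)
          = (∑ j ∈ Finset.range m,
              (if j = 0 then (-1 : ℝ) else 1) * (1 / 2) ^ j * B (m + 1 - j)) + 2 * B (m + 1) := by
        have h2 : ∑ j ∈ Finset.range m, (((1 / 2 : ℝ)) ^ j * B (m + 1 - j)
              - (if j = 0 then (-1 : ℝ) else 1) * (1 / 2) ^ j * B (m + 1 - j))
            = ∑ j ∈ Finset.range m, (if j = 0 then 2 * B (m + 1) else 0) := by
          apply Finset.sum_congr rfl
          intro j _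
          split_ifs with hj
          · subst hj
            norm_num
            ring
          · ring
        rw [Finset.sum_sub_distrib] at h2
        have h3 : ∑ j ∈ Finset.range m, (if j = 0 then 2 * B (m + 1) else 0) = 2 * B (m + 1) := by
          rw [Finset.sum_ite_eq' (Finset.range m) 0 (fun _ => 2 * B (m + 1))]
          simp [Nat.lt_of_lt_of_le Nat.zero_lt_one hm]
        rw [h3] at h2
        linarith
      rw [hd, IH]
      rw [if_pos rfl, show m + 1 + 1 - 0 = (m + 1) + 1 from rfl, hB (m + 1), hA m, hB m]
      linear_combination (B m) * h

/-- With `θ'(ξ) = γ(1/(ξ+iξ_c) + 1/(ξ−iξ_c))` and `f(ξ) = iξ_c/(ξ+iξ_c)`, for every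
`m ≥ 1`: `θ'(ξ)·Re(f(ξ)^m) = −(γ/ξ_c) Σ_{j=0}^{m−1} σ_j 2^{−j} Im(f(ξ)^{m+1−j})`,
where `σ_0 = −1` and `σ_j = 1` for `j ≥ 1`. -/
theorem theta_mul_re_pow (γ ξc : ℝ) (hξc : 0 < ξc) (m : ℕ) (hm : 1 ≤ m) (ξ : ℝ) :
    (γ : ℂ) * ((ξ + Complex.I * ξc)⁻¹ + (ξ - Complex.I * ξc)⁻¹) *
        (((Complex.I * ξc / (ξ + Complex.I * ξc)) ^ m).re : ℂ) =
      -(γ / ξc : ℝ) * ∑ j ∈ Finset.range m,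
        (((if j = 0 then (-1 : ℝ) else 1) : ℂ) * (1 / 2) ^ j *
          (((Complex.I * ξc / (ξ + Complex.I * ξc)) ^ (m + 1 - j)).im : ℂ)) := by
  have hd : (0 : ℝ) < ξ ^ 2 + ξc ^ 2 := by positivity
  set z : ℂ := (ξ : ℂ) + Complex.I * ξc with hz
  have hzne : z ≠ 0 := by
    intro h
    have := congrArg Complex.im h
    simp [hz] at this
    exact hξc.ne' this
  have hwne : (ξ : ℂ) - Complex.I * ξc ≠ 0 := by
    intro h
    have := congrArg Complex.im h
    simp at this
    exact hξc.ne' this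
  set f : ℂ := Complex.I * ξc / z with hf
  have hfre : f.re = ξc ^ 2 / (ξ ^ 2 + ξc ^ 2) := by
    rw [hf, hz]
    simp [Complex.div_re, Complex.normSq_apply]
    ring_nf
  have hfim : f.im = ξ * ξc / (ξ ^ 2 + ξc ^ 2) := by
    rw [hf, hz]
    simp [Complex.div_im, Complex.normSq_apply]
    ring_nf
  have habsq : f.re = f.re ^ 2 + f.im ^ 2 := by
    rw [hfre, hfim]
    field_simp
    ring
  have hA : ∀ k, (f ^ (k + 1)).re = f.re * (f ^ k).re - f.im * (f ^ k).im := by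
    intro k; rw [pow_succ, mul_comm]; simp [Complex.mul_re]
  have hB : ∀ k, (f ^ (k + 1)).im = f.re * (f ^ k).im + f.im * (f ^ k).re := by
    intro k; rw [pow_succ, mul_comm]; simp [Complex.mul_im]
  have key : ∑ j ∈ Finset.range m,
        (if j = 0 then (-1 : ℝ) else 1) * (1 / 2) ^ j * (f ^ (m + 1 - j)).im
      = -2 * f.im * (f ^ m).re :=
    sum_key_aux f.re f.im habsq (fun k => (f ^ k).re) (fun k => (f ^ k).im)
      (by simp) (by simp) hA hB m hm
  have hsum_inv : z⁻¹ + ((ξ : ℂ) - Complex.I * ξc)⁻¹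
      = ((2 * ξ / (ξ ^ 2 + ξc ^ 2) : ℝ) : ℂ) := by
    have hdC : ((ξ ^ 2 + ξc ^ 2 : ℝ) : ℂ) ≠ 0 := by exact_mod_cast hd.ne'
    rw [inv_add_inv hzne hwne, Complex.ofReal_div,
      div_eq_div_iff (mul_ne_zero hzne hwne) hdC, hz]
    push_cast
    linear_combination (2 * (ξ : ℂ) * (ξc : ℂ) ^ 2) * Complex.I_sq
  rw [hsum_inv]
  have hterm : ∀ j, (((if j = 0 then (-1 : ℝ) else 1) : ℂ) * (1 / 2) ^ j *
        (((f ^ (m + 1 - j)).im : ℝ) : ℂ))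
      = (((if j = 0 then (-1 : ℝ) else 1) * (1 / 2) ^ j * (f ^ (m + 1 - j)).im : ℝ) : ℂ) := by
    intro j
    split_ifs <;> push_cast <;> ring
  calc (γ : ℂ) * ((2 * ξ / (ξ ^ 2 + ξc ^ 2) : ℝ) : ℂ) * (((f ^ m).re : ℝ) : ℂ)
      = ((γ * (2 * ξ / (ξ ^ 2 + ξc ^ 2)) * (f ^ m).re : ℝ) : ℂ) := by push_cast; ring
    _ = ((-(γ / ξc) * ∑ j ∈ Finset.range m,
          (if j = 0 then (-1 : ℝ) else 1) * (1 / 2) ^ j * (f ^ (m + 1 - j)).im : ℝ) : ℂ) := by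
        congr 1
        rw [key, hfim]
        field_simp
    _ = -(γ / ξc : ℝ) * ∑ j ∈ Finset.range m,
          (((if j = 0 then (-1 : ℝ) else 1) : ℂ) * (1 / 2) ^ j *
            (((f ^ (m + 1 - j)).im : ℝ) : ℂ)) := by
        rw [Complex.ofReal_mul, Complex.ofReal_sum, Complex.ofReal_neg]
        exact congrArg _ (Finset.sum_congr rfl fun j _ => (hterm j).symm)
end

section
/- Let (α_n) be a sequence of reals (indexed by even n) satisfying α_{n+2} = α_n(1 − γ²/(n−1)²) − γ² c_n with |c_n| ≤ C(1/n + 1/(n−1)) for a constant C. Then there exists C₁ such that |α_n| ≤ C₁ ln n for all n ≥ 2. -/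
open Real Finset

lemma alb_sum_inv_sq (n : ℕ) :
    ∑ j ∈ Finset.range n, (1:ℝ) / (2 * (j:ℝ) + 1) ^ 2 ≤ 2 := by
  rcases Nat.eq_zero_or_pos n with h | h
  · simp [h]
  · have key : ∀ m : ℕ, 1 ≤ m →
        ∑ j ∈ Finset.range m, (1:ℝ) / (2 * (j:ℝ) + 1) ^ 2 ≤ 2 - 1 / ((m:ℝ) + 1) := by
      intro m hm
      induction m, hm using Nat.le_induction with
      | base => simp [Finset.sum_range_one]; norm_num
      | succ n hn ih =>
        rw [Finset.sum_range_succ]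
        have hx : (1:ℝ) ≤ (n:ℝ) := by exact_mod_cast hn
        have h1 : (1:ℝ) / (2 * (n:ℝ) + 1) ^ 2 ≤ 1 / (((n:ℝ) + 1) * ((n:ℝ) + 2)) := by
          apply one_div_le_one_div_of_le
          · positivity
          · nlinarith
        have h2 : (1:ℝ) / (((n:ℝ) + 1) * ((n:ℝ) + 2)) = 1 / ((n:ℝ) + 1) - 1 / ((n:ℝ) + 2) := by
          field_simp
          ring
        push_cast
        rw [h2] at h1
        have hc2 : ((n:ℝ) + 1) + 1 = (n:ℝ) + 2 := by ring
        rw [hc2]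
        linarith
    have := key n h
    have : (0:ℝ) < 1 / ((n:ℝ) + 1) := by positivity
    linarith [key n h]

lemma alb_prod_le (γ : ℝ) (n : ℕ) :
    ∏ j ∈ Finset.range n, (1 + γ ^ 2 / (2 * (j:ℝ) + 1) ^ 2) ≤ Real.exp (2 * γ ^ 2) := by
  have h1 : ∏ j ∈ Finset.range n, (1 + γ ^ 2 / (2 * (j:ℝ) + 1) ^ 2)
      ≤ ∏ j ∈ Finset.range n, Real.exp (γ ^ 2 / (2 * (j:ℝ) + 1) ^ 2) := by
    apply Finset.prod_le_prod
    · intro j _; positivity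
    · intro j _
      have := Real.add_one_le_exp (γ ^ 2 / (2 * (j:ℝ) + 1) ^ 2)
      linarith
  have h2 : ∏ j ∈ Finset.range n, Real.exp (γ ^ 2 / (2 * (j:ℝ) + 1) ^ 2)
      = Real.exp (∑ j ∈ Finset.range n, γ ^ 2 / (2 * (j:ℝ) + 1) ^ 2) :=
    (Real.exp_sum _ _).symm
  have h3 : ∑ j ∈ Finset.range n, γ ^ 2 / (2 * (j:ℝ) + 1) ^ 2 ≤ 2 * γ ^ 2 := by
    have : ∑ j ∈ Finset.range n, γ ^ 2 / (2 * (j:ℝ) + 1) ^ 2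
        = γ ^ 2 * ∑ j ∈ Finset.range n, (1:ℝ) / (2 * (j:ℝ) + 1) ^ 2 := by
      rw [Finset.mul_sum]; congr 1; ext j; ring
    rw [this]
    have := alb_sum_inv_sq n
    nlinarith [sq_nonneg γ]
  calc ∏ j ∈ Finset.range n, (1 + γ ^ 2 / (2 * (j:ℝ) + 1) ^ 2)
      ≤ Real.exp (∑ j ∈ Finset.range n, γ ^ 2 / (2 * (j:ℝ) + 1) ^ 2) := h1.trans (le_of_eq h2)
    _ ≤ Real.exp (2 * γ ^ 2) := Real.exp_le_exp.mpr h3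

lemma alb_one_le_prod (γ : ℝ) (n : ℕ) :
    1 ≤ ∏ j ∈ Finset.range n, (1 + γ ^ 2 / (2 * (j:ℝ) + 1) ^ 2) := by
  have h := Finset.prod_le_prod (s := Finset.range n) (f := fun _ : ℕ => (1:ℝ))
    (g := fun j : ℕ => 1 + γ ^ 2 / (2 * (j:ℝ) + 1) ^ 2)
    (by intro j _; norm_num)
    (by intro j _
        have : (0:ℝ) ≤ γ ^ 2 / (2 * (j:ℝ) + 1) ^ 2 := by positivity
        linarith)
  simpa using h

lemma alb_harm (n : ℕ) :
    ∑ j ∈ Finset.range n, (1:ℝ) / (2 * (j:ℝ) + 1) ≤ 1 + Real.log ((n:ℝ) + 1) := by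
  rcases Nat.eq_zero_or_pos n with h | h
  · simp [h]
  · induction n, h using Nat.le_induction with
    | base =>
      simp [Finset.sum_range_one]
      positivity
    | succ n hn ih =>
      rw [Finset.sum_range_succ]
      have hx : (1:ℝ) ≤ (n:ℝ) := by exact_mod_cast hn
      have hlog : Real.log (((n:ℝ) + 1) + 1) - Real.log ((n:ℝ) + 1) ≥ 1 / (2 * (n:ℝ) + 1) := by
        have hpos : (0:ℝ) < ((n:ℝ) + 1) / ((n:ℝ) + 2) := by positivity
        have h1 := Real.log_le_sub_one_of_pos hpos
        have h2 : Real.log (((n:ℝ) + 1) / ((n:ℝ) + 2))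
            = Real.log ((n:ℝ) + 1) - Real.log ((n:ℝ) + 2) := by
          rw [Real.log_div (by positivity) (by positivity)]
        have h3 : ((n:ℝ) + 1) / ((n:ℝ) + 2) - 1 = -(1 / ((n:ℝ) + 2)) := by
          field_simp
          norm_num
        have h4 : (1:ℝ) / (2 * (n:ℝ) + 1) ≤ 1 / ((n:ℝ) + 2) := by
          apply one_div_le_one_div_of_le
          · positivity
          · linarith
        rw [h2, h3] at h1
        have : ((n:ℝ) + 1) + 1 = (n:ℝ) + 2 := by ring
        rw [this]
        linarith
      push_cast
      have := ih
      push_cast at this ⊢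
      linarith

/-- If `α` (indexed by even `n = 2k+2`) satisfies
`α_{n+2} = α_n(1 − γ²/(n−1)²) − γ² c_n` with `|c_n| ≤ C(1/n + 1/(n−1))`, then
`|α_n| ≤ C₁ ln n` for all `n ≥ 2`. -/
theorem alpha_log_bound (γ C : ℝ) (hC : 0 < C) (α c : ℕ → ℝ)
    (hrec : ∀ k : ℕ,
      α (k + 1) = α k * (1 - γ ^ 2 / ((2 * (k : ℝ) + 1) ^ 2)) - γ ^ 2 * c k)
    (hc : ∀ k : ℕ, |c k| ≤ C * (1 / (2 * (k : ℝ) + 2) + 1 / (2 * (k : ℝ) + 1))) :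
    ∃ C₁ > 0, ∀ k : ℕ, |α k| ≤ C₁ * Real.log (2 * (k : ℝ) + 2) := by
  set A0 := |α 0| with hA0
  have hA0nn : 0 ≤ A0 := abs_nonneg _
  -- key invariant
  have key : ∀ k : ℕ, |α k| ≤
      (A0 + ∑ j ∈ Finset.range k, 2 * γ ^ 2 * C / (2 * (j:ℝ) + 1)) *
      ∏ j ∈ Finset.range k, (1 + γ ^ 2 / (2 * (j:ℝ) + 1) ^ 2) := by
    intro k
    induction k with
    | zero => simp [hA0]
    | succ k ih =>
      have hdpos : (0:ℝ) ≤ γ ^ 2 / (2 * (k:ℝ) + 1) ^ 2 := by positivity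
      have hstep : |α (k + 1)| ≤ |α k| * (1 + γ ^ 2 / (2 * (k:ℝ) + 1) ^ 2)
          + 2 * γ ^ 2 * C / (2 * (k:ℝ) + 1) := by
        rw [hrec k]
        have h1 : |α k * (1 - γ ^ 2 / ((2 * (k:ℝ) + 1) ^ 2)) - γ ^ 2 * c k|
            ≤ |α k| * |1 - γ ^ 2 / ((2 * (k:ℝ) + 1) ^ 2)| + γ ^ 2 * |c k| := by
          calc |α k * (1 - γ ^ 2 / ((2 * (k:ℝ) + 1) ^ 2)) - γ ^ 2 * c k|
              ≤ |α k * (1 - γ ^ 2 / ((2 * (k:ℝ) + 1) ^ 2))| + |γ ^ 2 * c k| := abs_sub _ _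
            _ = |α k| * |1 - γ ^ 2 / ((2 * (k:ℝ) + 1) ^ 2)| + γ ^ 2 * |c k| := by
                rw [abs_mul, abs_mul, abs_of_nonneg (sq_nonneg γ)]
        have h2 : |1 - γ ^ 2 / ((2 * (k:ℝ) + 1) ^ 2)| ≤ 1 + γ ^ 2 / (2 * (k:ℝ) + 1) ^ 2 := by
          rw [abs_sub_comm]
          calc |γ ^ 2 / ((2 * (k:ℝ) + 1) ^ 2) - 1|
              ≤ |γ ^ 2 / ((2 * (k:ℝ) + 1) ^ 2)| + |(1:ℝ)| := abs_sub _ _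
            _ = γ ^ 2 / (2 * (k:ℝ) + 1) ^ 2 + 1 := by
                rw [abs_of_nonneg hdpos, abs_one]
            _ = 1 + γ ^ 2 / (2 * (k:ℝ) + 1) ^ 2 := by ring
        have h3 : γ ^ 2 * |c k| ≤ 2 * γ ^ 2 * C / (2 * (k:ℝ) + 1) := by
          have hck := hc k
          have h4 : C * (1 / (2 * (k:ℝ) + 2) + 1 / (2 * (k:ℝ) + 1))
              ≤ 2 * C / (2 * (k:ℝ) + 1) := by
            have h5 : (1:ℝ) / (2 * (k:ℝ) + 2) ≤ 1 / (2 * (k:ℝ) + 1) := by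
              apply one_div_le_one_div_of_le
              · positivity
              · linarith
            have hCpos := hC.le
            rw [mul_add]
            have : 2 * C / (2 * (k:ℝ) + 1) = C * (1 / (2 * (k:ℝ) + 1)) + C * (1 / (2 * (k:ℝ) + 1)) := by
              ring
            rw [this]
            have := mul_le_mul_of_nonneg_left h5 hCpos
            linarith
          calc γ ^ 2 * |c k| ≤ γ ^ 2 * (C * (1 / (2 * (k:ℝ) + 2) + 1 / (2 * (k:ℝ) + 1))) :=
                mul_le_mul_of_nonneg_left hck (sq_nonneg γ)
            _ ≤ γ ^ 2 * (2 * C / (2 * (k:ℝ) + 1)) :=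
                mul_le_mul_of_nonneg_left h4 (sq_nonneg γ)
            _ = 2 * γ ^ 2 * C / (2 * (k:ℝ) + 1) := by ring
        have h6 : |α k| * |1 - γ ^ 2 / ((2 * (k:ℝ) + 1) ^ 2)|
            ≤ |α k| * (1 + γ ^ 2 / (2 * (k:ℝ) + 1) ^ 2) :=
          mul_le_mul_of_nonneg_left h2 (abs_nonneg _)
        linarith
      -- combine
      rw [Finset.sum_range_succ, Finset.prod_range_succ]
      set S := ∑ j ∈ Finset.range k, 2 * γ ^ 2 * C / (2 * (j:ℝ) + 1) with hS
      set P := ∏ j ∈ Finset.range k, (1 + γ ^ 2 / (2 * (j:ℝ) + 1) ^ 2) with hP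
      have hP1 : 1 ≤ P := alb_one_le_prod γ k
      have hSnn : 0 ≤ S := by
        apply Finset.sum_nonneg
        intro j _
        positivity
      have he : (0:ℝ) ≤ 2 * γ ^ 2 * C / (2 * (k:ℝ) + 1) := by positivity
      have hf : (1:ℝ) ≤ 1 + γ ^ 2 / (2 * (k:ℝ) + 1) ^ 2 := by linarith
      calc |α (k + 1)| ≤ |α k| * (1 + γ ^ 2 / (2 * (k:ℝ) + 1) ^ 2)
            + 2 * γ ^ 2 * C / (2 * (k:ℝ) + 1) := hstep
        _ ≤ (A0 + S) * P * (1 + γ ^ 2 / (2 * (k:ℝ) + 1) ^ 2)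
            + 2 * γ ^ 2 * C / (2 * (k:ℝ) + 1) := by
            have := mul_le_mul_of_nonneg_right ih (le_trans zero_le_one hf)
            linarith
        _ ≤ (A0 + (S + 2 * γ ^ 2 * C / (2 * (k:ℝ) + 1))) *
            (P * (1 + γ ^ 2 / (2 * (k:ℝ) + 1) ^ 2)) := by
            have hPf : 1 ≤ P * (1 + γ ^ 2 / (2 * (k:ℝ) + 1) ^ 2) := by
              nlinarith
            nlinarith
  -- assemble
  have hlog2 : (0:ℝ) < Real.log 2 := Real.log_pos (by norm_num)
  refine ⟨Real.exp (2 * γ ^ 2) * (A0 / Real.log 2 + 2 * γ ^ 2 * C * (1 / Real.log 2 + 1)) + 1,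
    ?_, ?_⟩
  · have h1 : 0 ≤ Real.exp (2 * γ ^ 2) * (A0 / Real.log 2 + 2 * γ ^ 2 * C * (1 / Real.log 2 + 1)) := by
      apply mul_nonneg (Real.exp_pos _).le
      have : 0 ≤ 2 * γ ^ 2 * C := by positivity
      positivity
    linarith
  · intro k
    set L := Real.log (2 * (k:ℝ) + 2) with hL
    have hLlog2 : Real.log 2 ≤ L := by
      apply Real.log_le_log (by norm_num)
      have : (0:ℝ) ≤ (k:ℝ) := Nat.cast_nonneg k
      linarith
    have hLpos : 0 < L := lt_of_lt_of_le hlog2 hLlog2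
    have hlogk : Real.log ((k:ℝ) + 1) ≤ L := by
      apply Real.log_le_log (by positivity)
      have : (0:ℝ) ≤ (k:ℝ) := Nat.cast_nonneg k
      linarith
    have h1 := key k
    have h2 : ∑ j ∈ Finset.range k, 2 * γ ^ 2 * C / (2 * (j:ℝ) + 1)
        ≤ 2 * γ ^ 2 * C * (1 + Real.log ((k:ℝ) + 1)) := by
      have : ∑ j ∈ Finset.range k, 2 * γ ^ 2 * C / (2 * (j:ℝ) + 1)
          = 2 * γ ^ 2 * C * ∑ j ∈ Finset.range k, (1:ℝ) / (2 * (j:ℝ) + 1) := by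
        rw [Finset.mul_sum]; congr 1; ext j; ring
      rw [this]
      have hnn : (0:ℝ) ≤ 2 * γ ^ 2 * C := by positivity
      exact mul_le_mul_of_nonneg_left (alb_harm k) hnn
    have h3 := alb_prod_le γ k
    have hSnn : 0 ≤ ∑ j ∈ Finset.range k, 2 * γ ^ 2 * C / (2 * (j:ℝ) + 1) := by
      apply Finset.sum_nonneg; intro j _; positivity
    have hP1 : 1 ≤ ∏ j ∈ Finset.range k, (1 + γ ^ 2 / (2 * (j:ℝ) + 1) ^ 2) :=
      alb_one_le_prod γ k
    -- |α k| ≤ (A0 + 2γ²C(1+log(k+1))) * exp(2γ²)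
    have h4 : |α k| ≤ (A0 + 2 * γ ^ 2 * C * (1 + Real.log ((k:ℝ) + 1))) * Real.exp (2 * γ ^ 2) := by
      have hbase : 0 ≤ A0 + ∑ j ∈ Finset.range k, 2 * γ ^ 2 * C / (2 * (j:ℝ) + 1) := by linarith
      calc |α k| ≤ (A0 + ∑ j ∈ Finset.range k, 2 * γ ^ 2 * C / (2 * (j:ℝ) + 1)) *
            ∏ j ∈ Finset.range k, (1 + γ ^ 2 / (2 * (j:ℝ) + 1) ^ 2) := h1
        _ ≤ (A0 + ∑ j ∈ Finset.range k, 2 * γ ^ 2 * C / (2 * (j:ℝ) + 1)) * Real.exp (2 * γ ^ 2) :=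
            mul_le_mul_of_nonneg_left h3 hbase
        _ ≤ (A0 + 2 * γ ^ 2 * C * (1 + Real.log ((k:ℝ) + 1))) * Real.exp (2 * γ ^ 2) := by
            apply mul_le_mul_of_nonneg_right _ (Real.exp_pos _).le
            linarith
    -- bound the coefficient by C₁ * L
    have hlogk1nn : 0 ≤ 1 + Real.log ((k:ℝ) + 1) := by
      have : 0 ≤ Real.log ((k:ℝ) + 1) := Real.log_nonneg (by push_cast; linarith [Nat.cast_nonneg (α := ℝ) k])
      linarith
    have h5 : A0 + 2 * γ ^ 2 * C * (1 + Real.log ((k:ℝ) + 1))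
        ≤ (A0 / Real.log 2 + 2 * γ ^ 2 * C * (1 / Real.log 2 + 1)) * L := by
      have hA : A0 ≤ (A0 / Real.log 2) * L := by
        rw [div_mul_eq_mul_div, le_div_iff₀ hlog2]
        exact mul_le_mul_of_nonneg_left hLlog2 hA0nn
      have hg : (0:ℝ) ≤ 2 * γ ^ 2 * C := by positivity
      have hB : 2 * γ ^ 2 * C * (1 + Real.log ((k:ℝ) + 1))
          ≤ 2 * γ ^ 2 * C * ((1 / Real.log 2 + 1) * L) := by
        apply mul_le_mul_of_nonneg_left _ hg
        have h1L : 1 ≤ (1 / Real.log 2) * L := by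
          rw [div_mul_eq_mul_div, one_mul, le_div_iff₀ hlog2, one_mul]
          exact hLlog2
        linarith
      calc A0 + 2 * γ ^ 2 * C * (1 + Real.log ((k:ℝ) + 1))
          ≤ (A0 / Real.log 2) * L + 2 * γ ^ 2 * C * ((1 / Real.log 2 + 1) * L) := by linarith
        _ = (A0 / Real.log 2 + 2 * γ ^ 2 * C * (1 / Real.log 2 + 1)) * L := by ring
    have h6 : (A0 + 2 * γ ^ 2 * C * (1 + Real.log ((k:ℝ) + 1))) * Real.exp (2 * γ ^ 2)
        ≤ Real.exp (2 * γ ^ 2) * ((A0 / Real.log 2 + 2 * γ ^ 2 * C * (1 / Real.log 2 + 1)) * L) := by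
      rw [mul_comm]
      exact mul_le_mul_of_nonneg_left h5 (Real.exp_pos _).le
    calc |α k| ≤ (A0 + 2 * γ ^ 2 * C * (1 + Real.log ((k:ℝ) + 1))) * Real.exp (2 * γ ^ 2) := h4
      _ ≤ Real.exp (2 * γ ^ 2) * ((A0 / Real.log 2 + 2 * γ ^ 2 * C * (1 / Real.log 2 + 1)) * L) := h6
      _ ≤ (Real.exp (2 * γ ^ 2) * (A0 / Real.log 2 + 2 * γ ^ 2 * C * (1 / Real.log 2 + 1)) + 1) * L := by
          nlinarith
end

section
/- Let a_j^{(n)} be reals with |a_0^{(n)}| + |a_1^{(n)}| ≤ A and |a_j^{(n)}| ≤ C₂ p^j/(n−1) for j ≥ 2, and define b_j^{(n)} = (1/(n−j)) Σ_{m=0}^{j} σ_{j−m} a_m^{(n)} where σ_0 = −1 and σ_k = 1 for k ≥ 1. Then there exists C₃ > 0 such that p^{−j} |b_j^{(n)}| ≤ C₃/(n−1) for all 0 ≤ j ≤ n−1. -/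
/-- If `|a_0| + |a_1| ≤ A` and `|a_j| ≤ C₂ p^j/(n−1)` for `2 ≤ j ≤ n−1`, and
`b_j = (1/(n−j)) Σ_{m=0}^{j} σ_{j−m} a_m` with `σ_0 = −1`, `σ_k = 1` for `k ≥ 1`
(so `σ_{j−m} = −1` iff `m = j`), then there is `C₃ > 0` (depending only on
`p, A, C₂`) with `p^{−j}|b_j| ≤ C₃/(n−1)` for all `0 ≤ j ≤ n−1`. -/
theorem b_coefficient_bound (p A C₂ : ℝ) (hp : 1 < p) (hA : 0 < A) (hC₂ : 0 < C₂) :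
    ∃ C₃ > 0, ∀ n : ℕ, 2 ≤ n → ∀ a : ℕ → ℝ,
      (|a 0| + |a 1| ≤ A) →
      (∀ j : ℕ, 2 ≤ j → j ≤ n - 1 → |a j| ≤ C₂ * p ^ j / ((n : ℝ) - 1)) →
      ∀ j : ℕ, j ≤ n - 1 →
        p ^ (-(j : ℝ)) *
          |(1 / ((n : ℝ) - j)) * ∑ m ∈ Finset.range (j + 1),
            (if m = j then (-1 : ℝ) else 1) * a m| ≤ C₃ / ((n : ℝ) - 1) := by
  have hp0 : 0 < p := lt_trans one_pos hp
  have hp1 : 0 < p - 1 := by linarith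
  refine ⟨A + (A + C₂ * p) / (p - 1), by positivity, ?_⟩
  intro n hn a ha01 ha j hj
  have hN2 : (2:ℝ) ≤ (n:ℝ) := by exact_mod_cast hn
  have hn1 : (1:ℝ) ≤ (n:ℝ) - 1 := by linarith
  have hjn : j + 1 ≤ n := by omega
  have hjr : (j:ℝ) + 1 ≤ (n:ℝ) := by exact_mod_cast hjn
  have hnj : (1:ℝ) ≤ (n:ℝ) - j := by linarith
  have hrp : p ^ (-(j:ℝ)) = (p ^ j)⁻¹ := by
    rw [Real.rpow_neg hp0.le, Real.rpow_natCast]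
  have hpj : (0:ℝ) < p ^ j := pow_pos hp0 j
  have hgeom : ∀ k : ℕ, ∑ m ∈ Finset.range k, p ^ m ≤ p ^ k / (p - 1) := by
    intro k
    rw [geom_sum_eq (ne_of_gt hp)]
    gcongr
    linarith
  -- bound the sum of |a m|
  have hsum : ∑ m ∈ Finset.range (j+1), |a m| ≤
      A + C₂ * p ^ (j+1) / ((p-1) * ((n:ℝ)-1)) := by
    have hpos : 0 ≤ C₂ * p ^ (j+1) / ((p-1) * ((n:ℝ)-1)) := by positivity
    rcases Nat.eq_zero_or_pos j with h0 | h1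
    · subst h0
      simp only [zero_add, Finset.sum_range_one]
      have := abs_nonneg (a 1)
      linarith
    · have hsplit : ∑ m ∈ Finset.Ico 0 2, |a m| + ∑ m ∈ Finset.Ico 2 (j+1), |a m|
          = ∑ m ∈ Finset.Ico 0 (j+1), |a m| :=
        Finset.sum_Ico_consecutive _ (by omega) (by omega)
      have h02 : ∑ m ∈ Finset.Ico 0 2, |a m| = |a 0| + |a 1| := by
        rw [← Finset.range_eq_Ico]
        simp [Finset.sum_range_succ]
      have htail : ∑ m ∈ Finset.Ico 2 (j+1), |a m| ≤
          C₂ * p ^ (j+1) / ((p-1) * ((n:ℝ)-1)) := by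
        calc ∑ m ∈ Finset.Ico 2 (j+1), |a m|
            ≤ ∑ m ∈ Finset.Ico 2 (j+1), C₂ * p ^ m / ((n:ℝ)-1) := by
              apply Finset.sum_le_sum
              intro m hm
              rw [Finset.mem_Ico] at hm
              exact ha m hm.1 (by omega)
          _ = C₂ / ((n:ℝ)-1) * ∑ m ∈ Finset.Ico 2 (j+1), p ^ m := by
              rw [Finset.mul_sum]; apply Finset.sum_congr rfl; intro m _; ring
          _ ≤ C₂ / ((n:ℝ)-1) * ∑ m ∈ Finset.range (j+1), p ^ m := by
              apply mul_le_mul_of_nonneg_left _ (by positivity)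
              apply Finset.sum_le_sum_of_subset_of_nonneg
              · rw [Finset.range_eq_Ico]
                exact Finset.Ico_subset_Ico (by omega) le_rfl
              · intro i _ _; positivity
          _ ≤ C₂ / ((n:ℝ)-1) * (p ^ (j+1) / (p-1)) :=
              mul_le_mul_of_nonneg_left (hgeom (j+1)) (by positivity)
          _ = C₂ * p ^ (j+1) / ((p-1) * ((n:ℝ)-1)) := by
              have hne1 : ((n:ℝ)-1) ≠ 0 := by linarith
              have hne2 : (p-1) ≠ 0 := ne_of_gt hp1
              field_simp
      rw [Finset.range_eq_Ico, ← hsplit, h02]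
      linarith
  -- triangle inequality
  have habs : |∑ m ∈ Finset.range (j+1), (if m = j then (-1:ℝ) else 1) * a m|
      ≤ ∑ m ∈ Finset.range (j+1), |a m| := by
    refine (Finset.abs_sum_le_sum_abs _ _).trans (le_of_eq ?_)
    apply Finset.sum_congr rfl
    intro m _
    rw [abs_mul]
    split <;> simp
  have hlhs : p ^ (-(j:ℝ)) *
      |(1 / ((n:ℝ) - j)) * ∑ m ∈ Finset.range (j + 1),
        (if m = j then (-1 : ℝ) else 1) * a m|
      ≤ (p ^ j)⁻¹ * (1 / ((n:ℝ) - j)) *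
        (A + C₂ * p ^ (j+1) / ((p-1) * ((n:ℝ)-1))) := by
    rw [hrp, abs_mul, abs_of_pos (by positivity : (0:ℝ) < 1 / ((n:ℝ) - j)), mul_assoc]
    gcongr
    exact habs.trans hsum
  refine hlhs.trans ?_
  -- final arithmetic
  set N : ℝ := (n:ℝ) with hNdef
  set Q : ℝ := p ^ j with hQdef
  have hQ1 : (1:ℝ) ≤ Q := one_le_pow₀ hp.le
  have hpj1 : p ^ (j+1) = p * Q := by rw [hQdef, pow_succ]; ring
  set X : ℝ := A + C₂ * p ^ (j+1) / ((p-1) * (N-1)) with hXdef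
  have hX0 : 0 ≤ X := by positivity
  have hrw : Q⁻¹ * (1 / (N - j)) * X = X / (Q * (N - j)) := by
    rw [div_eq_mul_inv X, mul_inv]; ring
  rw [hrw, div_le_div_iff₀ (by nlinarith) (by linarith)]
  have e1 : X * (N-1) = A * (N-1) + C₂ * p * Q / (p-1) := by
    rw [hXdef, hpj1]; field_simp
  rw [e1]
  have hC3 : (A + C₂ * p) / (p-1) ≤ A + (A + C₂ * p) / (p-1) := by linarith
  clear hlhs habs hsum hgeom ha ha01 hrp hj hjn hN2 a
  clear_value X Q N
  clear hrw hXdef hX0 e1 X hNdef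
  rcases Nat.eq_zero_or_pos j with h0 | h1
  · -- j = 0 : Q = 1
    have hQ : Q = 1 := by rw [hQdef, h0, pow_zero]
    have hj0 : (j:ℝ) = 0 := by rw [h0]; norm_num
    rw [hQ, hj0]
    have hD : 0 ≤ (A + C₂ * p) / (p-1) := by positivity
    have h2 : C₂ * p * 1 / (p-1) ≤ (A + C₂ * p)/(p-1) * (N-1) := by
      rw [div_mul_eq_mul_div]
      apply div_le_div_of_nonneg_right _ hp1.le
      nlinarith [mul_le_mul_of_nonneg_left hn1 (by positivity : (0:ℝ) ≤ A + C₂ * p)]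
    have h3 : (A + C₂ * p)/(p-1) * (N-1) ≤ (A + C₂ * p)/(p-1) * N :=
      mul_le_mul_of_nonneg_left (by linarith) hD
    have h4 : A * (N-1) ≤ A * N := mul_le_mul_of_nonneg_left (by linarith) hA.le
    have h5 : (A + (A + C₂ * p)/(p-1)) * (1 * (N - 0)) =
        A * N + (A + C₂ * p)/(p-1) * N := by ring
    linarith
  · have hj1 : (1:ℝ) ≤ (j:ℝ) := by exact_mod_cast h1
    have hkey : N - 1 ≤ (j:ℝ) * (N - j) := by
      nlinarith [mul_nonneg (by linarith : (0:ℝ) ≤ (j:ℝ) - 1) (by linarith : (0:ℝ) ≤ N - j - 1)]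
    have hber : (j:ℝ) * (p-1) ≤ Q := by
      have := one_add_mul_le_pow (by linarith : (-2:ℝ) ≤ p - 1) j
      simp only [add_sub_cancel] at this
      rw [hQdef]
      nlinarith
    have hNj0 : (0:ℝ) ≤ N - j := by linarith
    have h1' : A * (N-1) * (p-1) ≤ A * Q * (N - j) := by
      nlinarith [mul_le_mul_of_nonneg_left hkey hA.le,
        mul_le_mul_of_nonneg_right hber hNj0,
        mul_nonneg hA.le hNj0]
    have h2' : C₂ * p * Q ≤ C₂ * p * Q * (N - j) := by
      nlinarith [mul_pos (mul_pos hC₂ hp0) (lt_of_lt_of_le one_pos hQ1)]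
    have main : (A * (N-1) + C₂ * p * Q / (p-1)) * (p-1) ≤
        ((A + (A + C₂ * p)/(p-1)) * (Q * (N - j))) * (p-1) := by
      have eL : (A * (N-1) + C₂ * p * Q / (p-1)) * (p-1)
          = A * (N-1) * (p-1) + C₂ * p * Q := by
        field_simp
      have eR : ((A + (A + C₂ * p)/(p-1)) * (Q * (N - j))) * (p-1)
          = A * Q * (N - j) * (p-1) + (A * Q * (N - j) + C₂ * p * Q * (N - j)) := by
        field_simp
      have hpos1 : 0 ≤ A * Q * (N - j) * (p-1) := by positivity
      have hpos2 : 0 ≤ A * Q * (N - j) := by positivity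
      rw [eL, eR]
      linarith
    exact le_of_mul_le_mul_right main hp1
end

section
/- Let x_k, z_k : ℝ → ℂ be differentiable functions satisfying x_k' = i z_{k+1} and z_k' = i x_{k+1} + θ' y_k, y_k' = θ' z_k for all k. Define for fixed n ≥ k ≥ 1: g_{n+1,k} = Σ_{j=0}^{n−k} (x_{k+j} x_{n−j} + y_{k+j} y_{n−j} − z_{k+j} z_{n−j}). Then g_{n+1,k}' = 2i(x_k z_{n+1} − z_k x_{n+1}). -/
open Complex

/-- If `x_k' = i z_{k+1}`, `y_k' = θ' z_k`, `z_k' = i x_{k+1} + θ' y_k`, then for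
`1 ≤ k ≤ n` and `g_{n+1,k} = Σ_{j=0}^{n−k}(x_{k+j}x_{n−j} + y_{k+j}y_{n−j} − z_{k+j}z_{n−j})`,
one has `g_{n+1,k}' = 2i(x_k z_{n+1} − z_k x_{n+1})`. -/
theorem g_derivative_telescopes (θ' : ℝ → ℂ) (hθ : Continuous θ')
    (x y z : ℕ → ℝ → ℂ)
    (hx : ∀ k t, HasDerivAt (x k) (Complex.I * z (k + 1) t) t)
    (hy : ∀ k t, HasDerivAt (y k) (θ' t * z k t) t)
    (hz : ∀ k t, HasDerivAt (z k) (Complex.I * x (k + 1) t + θ' t * y k t) t)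
    (n k : ℕ) (hk : 1 ≤ k) (hkn : k ≤ n) (t : ℝ) :
    HasDerivAt
      (fun s : ℝ => ∑ j ∈ Finset.range (n - k + 1),
        (x (k + j) s * x (n - j) s + y (k + j) s * y (n - j) s -
          z (k + j) s * z (n - j) s))
      (2 * Complex.I * (x k t * z (n + 1) t - z k t * x (n + 1) t)) t := by
  set f : ℕ → ℂ := fun j => x (k + j) t * z (n + 1 - j) t - z (k + j) t * x (n + 1 - j) t
    with hf
  have key : ∀ j ∈ Finset.range (n - k + 1),
      HasDerivAt (fun s => x (k + j) s * x (n - j) s + y (k + j) s * y (n - j) s -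
          z (k + j) s * z (n - j) s)
        (Complex.I * (f j - f (j + 1))) t := by
    intro j hj
    have hjn : j + 1 ≤ n := by
      simp only [Finset.mem_range] at hj; omega
    have h :=
      (((hx (k + j) t).fun_mul (hx (n - j) t)).fun_add ((hy (k + j) t).fun_mul (hy (n - j) t))).fun_sub
        ((hz (k + j) t).fun_mul (hz (n - j) t))
    convert h using 1
    case e'_4 => rfl
    have h1 : n - j + 1 = n + 1 - j := by omega
    have h2 : n + 1 - (j + 1) = n - j := by omega
    have h3 : k + (j + 1) = k + j + 1 := by omega
    simp only [hf, h1, h2, h3]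
    ring
  have hsum := HasDerivAt.fun_sum key
  convert hsum using 1
  case e'_4 => rfl
  rw [← Finset.mul_sum, Finset.sum_range_sub' f]
  have h0 : f 0 = x k t * z (n + 1) t - z k t * x (n + 1) t := by
    simp [hf]
  have h1 : f (n - k + 1) = x (n + 1) t * z k t - z (n + 1) t * x k t := by
    have e1 : k + (n - k + 1) = n + 1 := by omega
    have e2 : n + 1 - (n - k + 1) = k := by omega
    simp [hf, e1, e2]
  rw [h0, h1]; ring
end
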